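/- Let G be a group, N a normal subgroup of G, and Q = G/N. Fix n ≥ 1 and r ≥ 0, and suppose that every finitely generated subgroup of Q can be generated by at most r elements. If both N and Q have only finitely many subgroups of index at most n, then G has only finitely many subgroups of index at most n, and s_n(G) ≤ s_n(N) · s_n(Q) · n^r. -/

import Mathlib

private lemma relindex_aux {G : Type*} [Group G] (H K : Subgroup G) (h : H.index ≠ 0) :
    H.relIndex K ≠ 0 ∧ H.relIndex K ≤ H.index := by
  have h1 : H.relIndex K ≠ 0 := fun h0 => h (Subgroup.index_eq_zero_of_relIndex_eq_zero h0)
  refine ⟨h1, ?_⟩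
  have h2 := Subgroup.relIndex_le_of_le_right (H := H) (K := K) le_top
    (by rwa [Subgroup.relIndex_top_right])
  rwa [Subgroup.relIndex_top_right] at h2

private lemma index_finset_inf_ne_zero {ι : Type*} {Q : Type*} [Group Q] (s : Finset ι)
    (f : ι → Subgroup Q) (h : ∀ i ∈ s, (f i).index ≠ 0) : (s.inf f).index ≠ 0 := by
  classical
  induction s using Finset.cons_induction with
  | empty => simp [Subgroup.index_top]
  | cons a s ha ih =>
    rw [Finset.inf_cons]
    exact Subgroup.index_inf_ne_zero (h a (Finset.mem_cons_self a s))
      (ih fun i hi => h i (Finset.mem_cons_of_mem hi))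

private lemma eq_of_inf_aux {G : Type*} [Group G] {N : Subgroup G} [N.Normal]
    {H K : Subgroup G} (hKH : K ≤ H) (hHN : H ⊓ N ≤ K)
    (hmap : H.map (QuotientGroup.mk' N) ≤ K.map (QuotientGroup.mk' N)) : H = K := by
  refine le_antisymm (fun h hh => ?_) hKH
  have h1 : QuotientGroup.mk' N h ∈ K.map (QuotientGroup.mk' N) :=
    hmap ⟨h, hh, rfl⟩
  obtain ⟨k, hk, hkh⟩ := Subgroup.mem_map.mp h1
  have hmem : k⁻¹ * h ∈ N := by
    rw [← QuotientGroup.ker_mk' N]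
    refine MonoidHom.mem_ker.mpr ?_
    rw [map_mul, map_inv, hkh, inv_mul_cancel]
  have h2 : k⁻¹ * h ∈ H ⊓ N := ⟨H.mul_mem (H.inv_mem (hKH hk)) hh, hmem⟩
  have h3 : k * (k⁻¹ * h) ∈ K := K.mul_mem hk (hHN h2)
  simpa using h3

private lemma fiber_card {G : Type} [Group G] (N : Subgroup G) [N.Normal]
    (n r : ℕ) (hn : 1 ≤ n)
    (hrank : ∀ Q' : Subgroup (G ⧸ N), Q'.FG →
      ∃ S : Finset (G ⧸ N), S.card ≤ r ∧ Subgroup.closure (S : Set (G ⧸ N)) = Q')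
    (A : Subgroup ↥N) (B : Subgroup (G ⧸ N))
    (F : Finset (Subgroup G))
    (hF : ∀ H ∈ F, H.index ≠ 0 ∧ H.index ≤ n ∧ H.subgroupOf N = A ∧
      H.map (QuotientGroup.mk' N) = B) :
    F.card ≤ n ^ r := by
  classical
  rcases F.eq_empty_or_nonempty with rfl | ⟨H₀, hH₀⟩
  · simp
  set π := QuotientGroup.mk' N with hπdef
  have hπsurj : Function.Surjective π := QuotientGroup.mk'_surjective N
  have hπout : ∀ q : G ⧸ N, π (Quotient.out q) = q := fun q => QuotientGroup.out_eq' q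
  -- A has small index
  have hA : A.index ≠ 0 ∧ A.index ≤ n := by
    obtain ⟨h0, h1, h2, -⟩ := hF H₀ hH₀
    have h3 := relindex_aux H₀ N h0
    rw [← h2]
    exact ⟨h3.1, h3.2.trans h1⟩
  haveI : A.FiniteIndex := ⟨hA.1⟩
  -- the common intersection with N
  have hAG : ∀ H ∈ F, H ⊓ N = A.map N.subtype := by
    intro H hH
    rw [← (hF H hH).2.2.1, Subgroup.subgroupOf_map_subtype]
  -- the subgroup W
  set W : Subgroup (G ⧸ N) := (F ×ˢ F).inf (fun p => (p.1 ⊓ p.2).map π) with hWdef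
  have hWindex : W.index ≠ 0 := by
    apply index_finset_inf_ne_zero
    rintro ⟨H, H'⟩ hp
    rw [Finset.mem_product] at hp
    have h1 : (H ⊓ H').index ≠ 0 :=
      Subgroup.index_inf_ne_zero (hF H hp.1).1 (hF H' hp.2).1
    have hdvd : ((H ⊓ H').map π).index ∣ (H ⊓ H').index :=
      Subgroup.index_map_dvd _ hπsurj
    exact fun h0 => h1 (by rwa [h0, zero_dvd_iff] at hdvd)
  have hWB : W ≤ B := by
    have hmem : (H₀, H₀) ∈ F ×ˢ F := Finset.mem_product.mpr ⟨hH₀, hH₀⟩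
    have h1 := Finset.inf_le (f := fun p : Subgroup G × Subgroup G => (p.1 ⊓ p.2).map π) hmem
    rw [← hWdef] at h1
    simpa [inf_idem, (hF H₀ hH₀).2.2.2] using h1
  -- finite coset space of W inside B
  have hW' : (W.subgroupOf B).index ≠ 0 := (relindex_aux W B hWindex).1
  haveI : (W.subgroupOf B).FiniteIndex := ⟨hW'⟩
  set T₀ : Set ↥B := Set.range (fun z : ↥B ⧸ W.subgroupOf B => Quotient.out z) with hT₀def
  set C : Subgroup (G ⧸ N) := Subgroup.closure (Subtype.val '' T₀) with hCdef
  have hCB : C ≤ B := (Subgroup.closure_le B).mpr (by rintro x ⟨t, -, rfl⟩; exact t.2)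
  have hCfg : C.FG :=
    (Subgroup.fg_iff _).mpr ⟨Subtype.val '' T₀, rfl, (Set.finite_range _).image _⟩
  obtain ⟨S, hScard, hSC⟩ := hrank C hCfg
  have hSB : ∀ q ∈ S, q ∈ B := fun q hq => hCB (hSC ▸ Subgroup.subset_closure hq)
  have hcover : B ≤ C ⊔ W := by
    intro b hb
    set z : ↥B ⧸ W.subgroupOf B := QuotientGroup.mk ⟨b, hb⟩ with hzdef
    have hout : (QuotientGroup.mk z.out : ↥B ⧸ W.subgroupOf B) = QuotientGroup.mk ⟨b, hb⟩ :=
      (QuotientGroup.out_eq' z).trans hzdef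
    have hmem : z.out⁻¹ * (⟨b, hb⟩ : ↥B) ∈ W.subgroupOf B := QuotientGroup.eq.mp hout
    have hw : ((z.out : ↥B) : G ⧸ N)⁻¹ * b ∈ W := by
      have h1 := Subgroup.mem_subgroupOf.mp hmem
      simpa using h1
    have ht : ((z.out : ↥B) : G ⧸ N) ∈ C :=
      Subgroup.subset_closure ⟨z.out, ⟨z, rfl⟩, rfl⟩
    have h2 : ((z.out : ↥B) : G ⧸ N) * (((z.out : ↥B) : G ⧸ N)⁻¹ * b) ∈ C ⊔ W :=
      Subgroup.mul_mem _ ((le_sup_left : C ≤ C ⊔ W) ht) ((le_sup_right : W ≤ C ⊔ W) hw)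
    simpa using h2
  have hcoverS : B ≤ Subgroup.closure (S : Set (G ⧸ N)) ⊔ W := by rw [hSC]; exact hcover
  -- lifts
  have hlift_ex : ∀ H ∈ F, ∀ q ∈ S, ∃ g, g ∈ H ∧ π g = q := by
    intro H hH q hq
    have hqB : q ∈ H.map π := by rw [(hF H hH).2.2.2]; exact hSB q hq
    exact Subgroup.mem_map.mp hqB
  set lift : Subgroup G → (G ⧸ N) → G := fun H q =>
    if h : ∃ g, g ∈ H ∧ π g = q then h.choose else 1 with hliftdef
  have hlift_spec : ∀ H ∈ F, ∀ q ∈ S, lift H q ∈ H ∧ π (lift H q) = q := by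
    intro H hH q hq
    have h := hlift_ex H hH q hq
    simp only [hliftdef, dif_pos h]
    exact h.choose_spec
  set w : Subgroup G → (G ⧸ N) → G := fun H q => (Quotient.out q)⁻¹ * lift H q with hwdef
  have hwN : ∀ H ∈ F, ∀ q ∈ S, w H q ∈ N := by
    intro H hH q hq
    rw [← QuotientGroup.ker_mk' N]
    refine MonoidHom.mem_ker.mpr ?_
    show π ((Quotient.out q)⁻¹ * lift H q) = 1
    rw [map_mul, map_inv, hπout, (hlift_spec H hH q hq).2, inv_mul_cancel]
  set f : Subgroup G → {q // q ∈ S} → (↥N ⧸ A) := fun H q =>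
    if h : w H (q : G ⧸ N) ∈ N then QuotientGroup.mk (⟨w H (q : G ⧸ N), h⟩ : ↥N)
    else QuotientGroup.mk 1 with hfdef
  -- injectivity
  have hinj : Set.InjOn f F := by
    intro H hH H' hH' heq
    rw [Finset.mem_coe] at hH hH'
    have hq : ∀ q ∈ S, q ∈ (H ⊓ H').map π := by
      intro q hq
      have h1 := congrFun heq ⟨q, hq⟩
      rw [hfdef] at h1
      simp only [dif_pos (hwN H hH q hq), dif_pos (hwN H' hH' q hq)] at h1
      have h2 : (⟨w H q, hwN H hH q hq⟩ : ↥N)⁻¹ * ⟨w H' q, hwN H' hH' q hq⟩ ∈ A :=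
        QuotientGroup.eq.mp h1
      have h3 : (w H q)⁻¹ * w H' q ∈ A.map N.subtype :=
        ⟨_, h2, rfl⟩
      have h4 : (lift H q)⁻¹ * lift H' q ∈ A.map N.subtype := by
        have : (w H q)⁻¹ * w H' q = (lift H q)⁻¹ * lift H' q := by
          rw [hwdef]
          group
        rwa [this] at h3
      have h5 : (lift H q)⁻¹ * lift H' q ∈ H := by
        rw [← hAG H hH] at h4
        exact h4.1
      have h6 : lift H' q ∈ H := by
        have := H.mul_mem (hlift_spec H hH q hq).1 h5
        simpa [mul_assoc] using this
      exact ⟨lift H' q, ⟨h6, (hlift_spec H' hH' q hq).1⟩, (hlift_spec H' hH' q hq).2⟩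
    have hWD : W ≤ (H ⊓ H').map π := by
      have hmem : (H, H') ∈ F ×ˢ F := Finset.mem_product.mpr ⟨hH, hH'⟩
      have h1 := Finset.inf_le (f := fun p : Subgroup G × Subgroup G => (p.1 ⊓ p.2).map π) hmem
      rwa [← hWdef] at h1
    have hSD : Subgroup.closure (S : Set (G ⧸ N)) ≤ (H ⊓ H').map π :=
      (Subgroup.closure_le _).mpr fun q hqS => hq q hqS
    have hBD : B ≤ (H ⊓ H').map π := hcoverS.trans (sup_le hSD hWD)
    have e1 : H ⊓ N = H' ⊓ N := (hAG H hH).trans (hAG H' hH').symm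
    have hH_eq : H = H ⊓ H' :=
      eq_of_inf_aux inf_le_left (le_inf inf_le_left ((le_of_eq e1).trans inf_le_left))
        (by rw [(hF H hH).2.2.2]; exact hBD)
    have hH'_eq : H' = H ⊓ H' :=
      eq_of_inf_aux inf_le_right (le_inf ((le_of_eq e1.symm).trans inf_le_left) inf_le_left)
        (by rw [(hF H' hH').2.2.2]; exact hBD)
    exact hH_eq.trans hH'_eq.symm
  -- counting
  have hle : F.card ≤ Nat.card ({q // q ∈ S} → (↥N ⧸ A)) := by
    rw [← Nat.card_eq_finsetCard]
    refine Nat.card_le_card_of_injective (fun x : {H // H ∈ F} => f x.1) ?_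
    intro x y hxy
    exact Subtype.ext (hinj x.2 y.2 hxy)
  have hcardfun : Nat.card ({q // q ∈ S} → (↥N ⧸ A)) = A.index ^ S.card := by
    rw [Nat.card_fun, ← Subgroup.index_eq_card, Nat.card_eq_finsetCard]
  calc F.card ≤ A.index ^ S.card := by rw [← hcardfun]; exact hle
    _ ≤ n ^ S.card := Nat.pow_le_pow_left hA.2 _
    _ ≤ n ^ r := Nat.pow_le_pow_right hn hScard

/-- If `N ⊴ G`, `Q = G/N` has all finitely generated subgroups generated by at most `r`
elements, and both `N` and `Q` have finitely many subgroups of index at most `n`, then so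
does `G`, and `s_n(G) ≤ s_n(N) · s_n(Q) · n^r`. -/
theorem stmt_13 (G : Type) [Group G] (N : Subgroup G) [N.Normal]
    (n : ℕ) (hn : 1 ≤ n) (r : ℕ)
    (hrank : ∀ Q' : Subgroup (G ⧸ N), Q'.FG →
      ∃ S : Finset (G ⧸ N), S.card ≤ r ∧ Subgroup.closure (S : Set (G ⧸ N)) = Q')
    (hN : {H : Subgroup ↥N | 0 < H.index ∧ H.index ≤ n}.Finite)
    (hQ : {H : Subgroup (G ⧸ N) | 0 < H.index ∧ H.index ≤ n}.Finite) :
    {H : Subgroup G | 0 < H.index ∧ H.index ≤ n}.Finite ∧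
    Nat.card {H : Subgroup G // 0 < H.index ∧ H.index ≤ n} ≤
      Nat.card {H : Subgroup ↥N // 0 < H.index ∧ H.index ≤ n} *
        Nat.card {H : Subgroup (G ⧸ N) // 0 < H.index ∧ H.index ≤ n} * n ^ r := by
  classical
  set π := QuotientGroup.mk' N with hπdef
  have hpow : 0 < n ^ r := Nat.one_le_pow r n hn
  have hmemN : ∀ H : Subgroup G, H.index ≠ 0 → H.index ≤ n →
      0 < (H.subgroupOf N).index ∧ (H.subgroupOf N).index ≤ n := by
    intro H h0 h1
    have h2 := relindex_aux H N h0
    exact ⟨Nat.pos_of_ne_zero h2.1, h2.2.trans h1⟩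
  have hmemQ : ∀ H : Subgroup G, H.index ≠ 0 → H.index ≤ n →
      0 < (H.map π).index ∧ (H.map π).index ≤ n := by
    intro H h0 h1
    have hdvd : (H.map π).index ∣ H.index :=
      Subgroup.index_map_dvd _ (QuotientGroup.mk'_surjective N)
    refine ⟨Nat.pos_of_ne_zero fun hz => h0 (by rwa [hz, zero_dvd_iff] at hdvd), ?_⟩
    exact (Nat.le_of_dvd (Nat.pos_of_ne_zero h0) hdvd).trans h1
  -- per-fiber injections
  have fib : ∀ (A : Subgroup ↥N) (B : Subgroup (G ⧸ N)),
      ∃ g : Subgroup G → Fin (n ^ r),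
        Set.InjOn g {H : Subgroup G | (0 < H.index ∧ H.index ≤ n) ∧
          H.subgroupOf N = A ∧ H.map π = B} := by
    intro A B
    set s : Set (Subgroup G) := {H : Subgroup G | (0 < H.index ∧ H.index ≤ n) ∧
      H.subgroupOf N = A ∧ H.map π = B} with hsdef
    have hFin : ∀ (F : Finset (Subgroup G)), ↑F ⊆ s → F.card ≤ n ^ r := by
      intro F hFs
      refine fiber_card N n r hn hrank A B F ?_
      intro H hH
      obtain ⟨⟨h0, h1⟩, h2, h3⟩ := hFs hH
      exact ⟨h0.ne', h1, h2, h3⟩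
    have hsfin : s.Finite := by
      by_contra hinf
      obtain ⟨t, hts, htfin, htcard⟩ :=
        Set.Infinite.exists_subset_ncard_eq hinf (n ^ r + 1)
      have h1 := hFin htfin.toFinset (by rwa [Set.Finite.coe_toFinset])
      rw [← Set.ncard_eq_toFinset_card t htfin, htcard] at h1
      omega
    haveI := hsfin.to_subtype
    haveI : Fintype ↥s := Fintype.ofFinite ↥s
    have hscard : Fintype.card ↥s ≤ n ^ r := by
      have h1 := hFin hsfin.toFinset (by rw [Set.Finite.coe_toFinset])
      rwa [Set.Finite.card_toFinset] at h1
    refine ⟨fun H => if h : H ∈ s then Fin.castLE hscard ((Fintype.equivFin ↥s) ⟨H, h⟩)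
      else ⟨0, hpow⟩, ?_⟩
    intro x hx y hy hxy
    simp only [dif_pos hx, dif_pos hy] at hxy
    have h2 := (Fintype.equivFin ↥s).injective (Fin.castLE_injective hscard hxy)
    exact Subtype.ext_iff.mp h2
  choose g hg using fib
  set Φ : {H : Subgroup G // 0 < H.index ∧ H.index ≤ n} →
      ({A : Subgroup ↥N // 0 < A.index ∧ A.index ≤ n} ×
        {B : Subgroup (G ⧸ N) // 0 < B.index ∧ B.index ≤ n} × Fin (n ^ r)) :=
    fun H => (⟨H.1.subgroupOf N, hmemN H.1 H.2.1.ne' H.2.2⟩,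
      ⟨H.1.map π, hmemQ H.1 H.2.1.ne' H.2.2⟩,
      g (H.1.subgroupOf N) (H.1.map π) H.1) with hΦdef
  have hΦinj : Function.Injective Φ := by
    intro x y hxy
    have h1 : x.1.subgroupOf N = y.1.subgroupOf N :=
      congrArg (fun p => p.1.1) hxy
    have h2 : x.1.map π = y.1.map π :=
      congrArg (fun p => p.2.1.1) hxy
    have h3 : g (x.1.subgroupOf N) (x.1.map π) x.1
        = g (y.1.subgroupOf N) (y.1.map π) y.1 :=
      congrArg (fun p => p.2.2) hxy
    rw [h1, h2] at h3
    have hx : x.1 ∈ {H : Subgroup G | (0 < H.index ∧ H.index ≤ n) ∧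
        H.subgroupOf N = y.1.subgroupOf N ∧ H.map π = y.1.map π} := ⟨x.2, h1, h2⟩
    have hy : y.1 ∈ {H : Subgroup G | (0 < H.index ∧ H.index ≤ n) ∧
        H.subgroupOf N = y.1.subgroupOf N ∧ H.map π = y.1.map π} := ⟨y.2, rfl, rfl⟩
    exact Subtype.ext (hg _ _ hx hy h3)
  haveI hNfin : Finite {A : Subgroup ↥N // 0 < A.index ∧ A.index ≤ n} := hN.to_subtype
  haveI hQfin : Finite {B : Subgroup (G ⧸ N) // 0 < B.index ∧ B.index ≤ n} := hQ.to_subtype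
  have hFinite : Finite {H : Subgroup G // 0 < H.index ∧ H.index ≤ n} :=
    Finite.of_injective Φ hΦinj
  constructor
  · exact Set.finite_coe_iff.mp hFinite
  · have hcard := Nat.card_le_card_of_injective Φ hΦinj
    rw [Nat.card_prod, Nat.card_prod] at hcard
    simp only [Nat.card_eq_fintype_card, Fintype.card_fin] at hcard
    calc Nat.card {H : Subgroup G // 0 < H.index ∧ H.index ≤ n}
        ≤ Nat.card {A : Subgroup ↥N // 0 < A.index ∧ A.index ≤ n} *
          (Nat.card {B : Subgroup (G ⧸ N) // 0 < B.index ∧ B.index ≤ n} * n ^ r) := hcard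
      _ = _ := by ring
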